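/- For any concrete site D, a morphism f : X → Y of concrete sheaves on D is an epimorphism if and only if its underlying function f₁ : X(1) → Y(1) is surjective. -/

import Mathlib

open CategoryTheory CategoryTheory.Limits Opposite

universe u

/-- A concrete site: a subcanonical site with a terminal object such that `hom(1,-)` is
faithful and covering families are jointly surjective on points. -/
structure ConcreteSite : Type (u + 1) where
  C : Type u
  [cat : Category.{u} C]
  J : Coverage C
  term : C
  isTerminal : IsTerminal term
  subcanonical : ∀ X : C, Presieve.IsSheaf J.toGrothendieck (yoneda.obj X)
  pointsFaithful : ∀ {A B : C} (f g : A ⟶ B), (∀ p : term ⟶ A, p ≫ f = p ≫ g) → f = g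
  jointlySurjective : ∀ {X : C} {R : Presieve X}, R ∈ J.coverings X →
    ∀ p : term ⟶ X, ∃ (Y : C) (f : Y ⟶ X) (q : term ⟶ Y), R f ∧ q ≫ f = p

attribute [instance] ConcreteSite.cat

variable (S : ConcreteSite.{u})

/-- The underlying function of a plot. -/
def uFn (X : S.Cᵒᵖ ⥤ Type u) {D : S.C} (φ : X.obj (op D)) :
    (S.term ⟶ D) → X.obj (op S.term) :=
  fun d => X.map d.op φ

/-- A presheaf is concrete if plots are determined by their underlying functions. -/
def IsConcrete (X : S.Cᵒᵖ ⥤ Type u) : Prop :=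
  ∀ D : S.C, Function.Injective (fun φ : X.obj (op D) => uFn S X φ)

def IsConcSheaf (X : S.Cᵒᵖ ⥤ Type u) : Prop :=
  Presieve.IsSheaf S.J.toGrothendieck X ∧ IsConcrete S X

/-- The category of concrete sheaves on a concrete site, a full subcategory of presheaves. -/
abbrev ConcSheaf := ObjectProperty.FullSubcategory (IsConcSheaf S)

/-- The forgetful functor to presheaves. -/
abbrev toPre : ConcSheaf S ⥤ (S.Cᵒᵖ ⥤ Type u) := ObjectProperty.ι _

/-- The underlying-set functor, sending a concrete sheaf `X` to `X(1)`. -/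
abbrev uSet : ConcSheaf S ⥤ Type u := toPre S ⋙ (evaluation _ _).obj (op S.term)


/-- The concrete sheaf of "subsets of points". -/
def Omega : S.Cᵒᵖ ⥤ Type u where
  obj D := (S.term ⟶ unop D) → Prop
  map f := TypeCat.ofHom (fun A p => A (p ≫ f.unop))
  map_id D := by ext A p; simp
  map_comp f g := by ext A p; simp

lemma Omega_map_apply {D D' : S.Cᵒᵖ} (f : D ⟶ D') (A : (Omega S).obj D) (p : S.term ⟶ unop D') :
    (Omega S).map f A p = A (p ≫ f.unop) := rfl

lemma Omega_isSheaf : Presieve.IsSheaf S.J.toGrothendieck (Omega S) := by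
  rw [Presieve.isSheaf_coverage]
  intro X R hR x hx
  refine ⟨fun p => ∃ (Z : S.C) (g : Z ⟶ X) (hg : R g) (q : S.term ⟶ Z),
      q ≫ g = p ∧ x g hg q, ?_, ?_⟩
  · intro Z g hg
    funext q
    apply propext
    constructor
    · rintro ⟨Z', g', hg', q', hq', hx'⟩
      have := congrFun (hx q' q hg' hg (by simpa using hq')) (𝟙 S.term)
      simp only [Category.id_comp, Omega_map_apply, Quiver.Hom.unop_op] at this
      exact this ▸ hx'
    · intro hq
      exact ⟨Z, g, hg, q, rfl, hq⟩
  · intro t ht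
    funext p
    obtain ⟨Z, g, q, hg, hq⟩ := S.jointlySurjective hR p
    have h1 := congrFun (ht g hg) q
    simp only [Omega] at h1 ⊢
    apply propext
    constructor
    · intro hp
      refine ⟨Z, g, hg, q, hq, ?_⟩
      rw [← h1]
      rwa [← hq] at hp
    · rintro ⟨Z', g', hg', q', hq', hx'⟩
      have h1' : t (q ≫ g) = x g hg q := h1
      rw [← hq, h1']
      have := congrFun (hx q' q hg' hg (by rw [hq', hq])) (𝟙 S.term)
      simp only [Category.id_comp, Omega_map_apply, Quiver.Hom.unop_op] at this
      exact this ▸ hx'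

lemma Omega_concrete : IsConcrete S (Omega S) := by
  intro D A B h
  funext p
  have := congrFun (congrFun h p) (𝟙 S.term)
  simpa [uFn, Omega_map_apply] using this

/-- `Omega` as a concrete sheaf. -/
def OmegaSh : ConcSheaf S := ⟨Omega S, Omega_isSheaf S, Omega_concrete S⟩

/-- a morphism of concrete sheaves is an epimorphism iff its underlying
function is surjective. -/
theorem statement8 (S : ConcreteSite.{u}) {X Y : ConcSheaf S} (f : X ⟶ Y) :
    Epi f ↔ Function.Surjective ((uSet S).map f) := by
  constructor
  · intro hepi y
    -- two maps Y ⟶ Omega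
    let g : Y ⟶ OmegaSh S :=
      ObjectProperty.homMk
      { app := fun D => TypeCat.ofHom (fun φ p => ∃ ψ : X.obj.obj (op S.term),
          f.hom.app (op S.term) ψ = Y.obj.map p.op φ)
        naturality := by
          intro D D' e
          refine ConcreteCategory.hom_ext _ _ fun φ => ?_
          funext p
          simp only [OmegaSh, types_comp_apply, Omega_map_apply]
          apply propext
          constructor
          · rintro ⟨ψ, hψ⟩
            exact ⟨ψ, by rw [hψ]; exact (FunctorToTypes.map_comp_apply Y.obj e p.op φ).symm⟩
          · rintro ⟨ψ, hψ⟩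
            exact ⟨ψ, by rw [hψ]; exact FunctorToTypes.map_comp_apply Y.obj e p.op φ⟩ }
    let h : Y ⟶ OmegaSh S :=
      ObjectProperty.homMk
      { app := fun D => TypeCat.ofHom (fun φ p => True)
        naturality := by intro D D' e; ext φ p; rfl }
    have key : f ≫ g = f ≫ h := by
      apply ObjectProperty.hom_ext
      apply NatTrans.ext
      funext D
      refine ConcreteCategory.hom_ext _ _ fun ψ => ?_
      funext p
      apply propext
      constructor
      · intro _; trivial
      · intro _
        exact ⟨X.obj.map p.op ψ, ConcreteCategory.congr_hom (f.hom.naturality p.op) ψ⟩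
    have : g = h := (cancel_epi f).mp key
    have hy := congrFun (ConcreteCategory.congr_hom (NatTrans.congr_app (congrArg InducedCategory.Hom.hom this) (op S.term)) y) (𝟙 S.term)
    change (∃ ψ : X.obj.obj (op S.term), f.hom.app (op S.term) ψ = Y.obj.map (𝟙 S.term).op y) = True at hy
    simp only [g, h, iff_true, eq_iff_iff] at hy
    obtain ⟨ψ, hψ⟩ := hy
    exact ⟨ψ, by simpa using hψ⟩
  · intro hsurj
    constructor
    intro Z g h hgh
    apply ObjectProperty.hom_ext
    apply NatTrans.ext
    funext D
    ext φ
    apply Z.property.2 (unop D)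
    funext d
    have hg := ConcreteCategory.congr_hom (g.hom.naturality d.op) φ
    have hh := ConcreteCategory.congr_hom (h.hom.naturality d.op) φ
    simp only [types_comp_apply] at hg hh
    obtain ⟨ψ, hψ⟩ := hsurj (Y.obj.map d.op φ)
    have hD : (op (unop D)) = D := rfl
    show (Z.obj.map d.op) (g.hom.app D φ) = (Z.obj.map d.op) (h.hom.app D φ)
    rw [← hg, ← hh, ← hψ]
    have := ConcreteCategory.congr_hom (NatTrans.congr_app (congrArg InducedCategory.Hom.hom hgh) (op S.term)) ψ
    simpa using this
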